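/- Let X be a core compact sober space, S a ∪-basis of X, and P a proper round prime filter on (S, ⊆, ⋐). Setting O = ∪(S \ P), the complement X \ O is an irreducible closed set, and for its dense point x one has P = S_x = {s ∈ S : x ∈ s}. -/

import Mathlib

variable {S : Type*} [SemilatticeSup S] [OrderBot S]

/-- A (nonempty) filter: an up-set in which any two elements have a common lower bound. -/
def IsFilt (F : Set S) : Prop :=
  F.Nonempty ∧ (∀ p ∈ F, ∀ q, p ≤ q → q ∈ F) ∧
    ∀ p ∈ F, ∀ q ∈ F, ∃ t ∈ F, t ≤ p ∧ t ≤ q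

/-- A filter is round if every member has a `r`-predecessor in the filter. -/
def IsRound (r : S → S → Prop) (F : Set S) : Prop :=
  ∀ p ∈ F, ∃ t ∈ F, r t p

/-- Primeness: `p ⊔ q ∈ P` implies `p ∈ P` or `q ∈ P`. -/
def IsPrimeFilt (P : Set S) : Prop :=
  ∀ p q, p ⊔ q ∈ P → p ∈ P ∨ q ∈ P

/-- The spectrum: proper round prime filters. -/
def Spec (r : S → S → Prop) : Type _ :=
  {P : Set S // IsFilt P ∧ IsRound r P ∧ IsPrimeFilt P ∧ ⊥ ∉ P}

/-- The basic open set `Ŝ_p`. -/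
def basicOpen (r : S → S → Prop) (p : S) : Set (Spec r) :=
  {P | p ∈ P.1}

instance specTop (r : S → S → Prop) : TopologicalSpace (Spec r) :=
  TopologicalSpace.generateFrom (Set.range (basicOpen r))

/-- Distributivity of `r`. -/
def IsDistrib (r : S → S → Prop) : Prop :=
  ∀ p s t, r p (s ⊔ t) → ∀ p', r p' p →
    ∃ s' t', r s' s ∧ r t' t ∧ p' ≤ s' ⊔ t' ∧ s' ⊔ t' ≤ p

/-- `r` is auxiliary. -/
def IsAux (r : S → S → Prop) : Prop :=
  (∀ p p' q' q, p ≤ p' → r p' q' → q' ≤ q → r p q) ∧ ∀ p q, r p q → p ≤ q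

/-- `r` is interpolative. -/
def IsInterp (r : S → S → Prop) : Prop :=
  ∀ p q, r p q → ∃ s, r p s ∧ r s q

/-- `r` is approximating: `≤` is the lower preorder of `r`. -/
def IsApprox (r : S → S → Prop) : Prop :=
  ∀ p q, p ≤ q ↔ ∀ t, r t p → r t q

/-- `r` is `∨`-preserving. -/
def IsSupPres (r : S → S → Prop) : Prop :=
  ∀ p p' q q', r p' p → r q' q → r (p' ⊔ q') (p ⊔ q)

/-- `S` with `r` is a `∨`-predomain. -/
def IsPredom (r : S → S → Prop) : Prop :=
  IsAux r ∧ IsApprox r ∧ IsInterp r ∧ IsSupPres r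

/-- Ideal: downward closed and closed under pairwise joins. -/
def IsIdl (I : Set S) : Prop :=
  (∀ p ∈ I, ∀ q, q ≤ p → q ∈ I) ∧ ∀ p ∈ I, ∀ q ∈ I, p ⊔ q ∈ I

/-- The way-below relation on subsets of a topological space:
every open cover of `q` has a finite subcover of `p`. -/
def WayBelow {X : Type*} [TopologicalSpace X] (p q : Set X) : Prop :=
  ∀ C : Set (Set X), (∀ U ∈ C, IsOpen U) → q ⊆ ⋃₀ C →
    ∃ F ⊆ C, F.Finite ∧ p ⊆ ⋃₀ F

/-- Core compactness. -/
def CoreCompact (X : Type*) [TopologicalSpace X] : Prop :=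
  ∀ (x : X) (U : Set X), IsOpen U → x ∈ U → ∃ V, IsOpen V ∧ x ∈ V ∧ WayBelow V U

/-- A `∪`-basis: a basis containing `∅` and closed under pairwise unions. -/
def IsUnionBasis {X : Type*} [TopologicalSpace X] (B : Set (Set X)) : Prop :=
  TopologicalSpace.IsTopologicalBasis B ∧ ∅ ∈ B ∧ ∀ p ∈ B, ∀ q ∈ B, p ∪ q ∈ B

/-- A filter on a `∪`-basis `B`. -/
def BFilt {X : Type*} [TopologicalSpace X] (B : Set (Set X)) (P : Set (Set X)) : Prop :=
  P.Nonempty ∧ P ⊆ B ∧ (∀ p ∈ P, ∀ q ∈ B, p ⊆ q → q ∈ P) ∧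
    ∀ p ∈ P, ∀ q ∈ P, ∃ t ∈ P, t ⊆ p ∧ t ⊆ q

/-- The spectrum of a `∪`-basis `B` with `⊆` as order and way-below `⋐` as `≺`:
proper round prime filters on `B`. -/
def BSpec {X : Type*} [TopologicalSpace X] (B : Set (Set X)) : Type _ :=
  {P : Set (Set X) // BFilt B P ∧ (∀ p ∈ P, ∃ t ∈ P, WayBelow t p) ∧
    (∀ p ∈ B, ∀ q ∈ B, p ∪ q ∈ P → p ∈ P ∨ q ∈ P) ∧ ∅ ∉ P}

def bBasic {X : Type*} [TopologicalSpace X] (B : Set (Set X)) (p : Set X) :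
    Set (BSpec B) := {P | p ∈ P.1}

instance bSpecTop {X : Type*} [TopologicalSpace X] (B : Set (Set X)) :
    TopologicalSpace (BSpec B) :=
  TopologicalSpace.generateFrom (Set.range (bBasic B))

theorem stmt5 {X : Type*} [TopologicalSpace X] [QuasiSober X] [T0Space X]
    (hcc : CoreCompact X) (B : Set (Set X)) (hB : IsUnionBasis B) (P : BSpec B) :
    IsClosed (⋃₀ (B \ P.1))ᶜ ∧ IsIrreducible (⋃₀ (B \ P.1))ᶜ ∧
      ∃ x, closure {x} = (⋃₀ (B \ P.1))ᶜ ∧ P.1 = {s | s ∈ B ∧ x ∈ s} := by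
  obtain ⟨Pset, ⟨hne, hsub, hup, hdir⟩, hround, hprime, hproper⟩ := P
  set O := ⋃₀ (B \ Pset) with hO
  have hOopen : IsOpen O := isOpen_sUnion fun t ht => hB.1.isOpen ht.1
  -- finite unions of B are in B; primeness for finite unions
  have hfin : ∀ F : Set (Set X), F.Finite → F ⊆ B →
      ⋃₀ F ∈ B ∧ (⋃₀ F ∈ Pset → ∃ u ∈ F, u ∈ Pset) := by
    intro F hF
    refine Set.Finite.induction_on (motive := fun F _ => F ⊆ B → ⋃₀ F ∈ B ∧ (⋃₀ F ∈ Pset → ∃ u ∈ F, u ∈ Pset)) F hF (fun _ => ?_) ?_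
    ·
      simp only [Set.sUnion_empty]
      exact ⟨hB.2.1, fun h => absurd h hproper⟩
    · intro a F ha hF ih hFB
      have haB : a ∈ B := hFB (Set.mem_insert a F)
      have hFB' : F ⊆ B := fun x hx => hFB (Set.mem_insert_of_mem a hx)
      obtain ⟨ihB, ihP⟩ := ih hFB'
      rw [Set.sUnion_insert]
      refine ⟨hB.2.2 a haB _ ihB, fun h => ?_⟩
      rcases hprime a haB _ ihB h with h' | h'
      · exact ⟨a, Set.mem_insert a F, h'⟩
      · obtain ⟨u, hu, hu'⟩ := ihP h'
        exact ⟨u, Set.mem_insert_of_mem a hu, hu'⟩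
  -- members of P are not contained in O
  have hkey : ∀ s ∈ Pset, ¬ s ⊆ O := by
    intro s hs hsO
    obtain ⟨t, ht, htwb⟩ := hround s hs
    obtain ⟨F, hFsub, hFfin, htF⟩ := htwb (B \ Pset)
      (fun u hu => hB.1.isOpen hu.1) hsO
    have hFB : F ⊆ B := fun x hx => (hFsub hx).1
    obtain ⟨hUB, hUP⟩ := hfin F hFfin hFB
    have : ⋃₀ F ∈ Pset := hup t ht _ hUB htF
    obtain ⟨u, hu, hu'⟩ := hUP this
    exact (hFsub hu).2 hu'
  -- characterization: s ∈ Pset ↔ s ∈ B ∧ s meets Oᶜ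
  have hchar : ∀ s, s ∈ Pset ↔ s ∈ B ∧ (s ∩ Oᶜ).Nonempty := by
    intro s
    constructor
    · intro hs
      refine ⟨hsub hs, ?_⟩
      rcases Set.not_subset.mp (hkey s hs) with ⟨x, hx, hx'⟩
      exact ⟨x, hx, hx'⟩
    · rintro ⟨hsB, x, hxs, hxO⟩
      by_contra h
      exact hxO ⟨s, ⟨hsB, h⟩, hxs⟩
  have hCne : (Oᶜ : Set X).Nonempty := by
    obtain ⟨p, hp⟩ := hne
    obtain ⟨-, x, -, hx⟩ := (hchar p).mp hp
    exact ⟨x, hx⟩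
  have hirr : IsIrreducible (Oᶜ : Set X) := by
    refine ⟨hCne, fun U V hU hV ⟨x, hxC, hxU⟩ ⟨y, hyC, hyV⟩ => ?_⟩
    obtain ⟨s, hsB, hxs, hsU⟩ := hB.1.exists_subset_of_mem_open hxU hU
    obtain ⟨t, htB, hyt, htV⟩ := hB.1.exists_subset_of_mem_open hyV hV
    have hsP : s ∈ Pset := (hchar s).mpr ⟨hsB, x, hxs, hxC⟩
    have htP : t ∈ Pset := (hchar t).mpr ⟨htB, y, hyt, hyC⟩
    obtain ⟨w, hwP, hws, hwt⟩ := hdir s hsP t htP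
    obtain ⟨-, z, hzw, hzC⟩ := (hchar w).mp hwP
    exact ⟨z, hzC, hsU (hws hzw), htV (hwt hzw)⟩
  refine ⟨hOopen.isClosed_compl, hirr, ?_⟩
  obtain ⟨x, hx⟩ := QuasiSober.sober hirr hOopen.isClosed_compl
  refine ⟨x, hx, ?_⟩
  have hxC : x ∈ (Oᶜ : Set X) := hx ▸ subset_closure rfl
  ext s
  simp only [Set.mem_setOf_eq]
  rw [hchar s]
  constructor
  · rintro ⟨hsB, y, hys, hyC⟩
    rw [← hx] at hyC
    obtain ⟨z, hz1, hz2⟩ := mem_closure_iff.mp hyC s (hB.1.isOpen hsB) hys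
    exact ⟨hsB, Set.mem_singleton_iff.mp hz2 ▸ hz1⟩
  · rintro ⟨hsB, hxs⟩
    exact ⟨hsB, x, hxs, hxC⟩
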